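/- Let n ≥ 2. For x ∈ ℝⁿ⁺¹ write x̂ = (x₁, …, xₙ) and q(x̂) = −x₁² + x₂² + … + xₙ²; whenever q(x̂) < 0 (so x₁ ≠ 0), define L(x) = sign(x₁)·x_{n+1}/√(−q(x̂)). Let J = diag(−1, I_{n−1}), let A ∈ Mₙ(ℝ) satisfy Aᵀ·J·A = J, let v ∈ ℝⁿ be a row vector, let δ ∈ {1, −1}, and let g be the (n+1)×(n+1) block matrix [[A, 0], [v, δ]]. Then for any x, y ∈ ℝⁿ⁺¹ with x̂ = ŷ and q(x̂) < 0, one has q(widehat{g·x}) < 0 and |L(g·x) − L(g·y)| = |L(x) − L(y)|. -/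

import Mathlib

open Matrix

/-- The form matrix `J = diag(-1, I_{d-1})`. -/
def Jmat (d : ℕ) : Matrix (Fin d) (Fin d) ℝ :=
  Matrix.diagonal fun i => if (i : ℕ) = 0 then -1 else 1

/-- The quadratic form `q(x̂) = -x₁² + x₂² + ⋯ + x_d²`. -/
def qf {d : ℕ} (v : Fin d → ℝ) : ℝ := v ⬝ᵥ (Jmat d).mulVec v

/-- The fiber-length coordinate `L(x) = sign(x₁)·x_{n+1}/√(-q(x̂))` on the
region `q(x̂) < 0` of `ℝⁿ⁺¹` (coordinates indexed by `Fin (n+2) ⊕ Unit`,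
so the dimension `n + 2` ranges over all integers `≥ 2`). -/
noncomputable def Lfib (n : ℕ) (x : Fin (n + 2) ⊕ Unit → ℝ) : ℝ :=
  Real.sign (x (Sum.inl 0)) * x (Sum.inr ()) /
    Real.sqrt (-(qf fun i => x (Sum.inl i)))

lemma Jmat_symm (d : ℕ) : (Jmat d)ᵀ = Jmat d := by
  simp [Jmat]

lemma qf_inv {d : ℕ} (A : Matrix (Fin d) (Fin d) ℝ) (hA : Aᵀ * Jmat d * A = Jmat d)
    (w : Fin d → ℝ) : qf (A.mulVec w) = qf w := by
  unfold qf
  calc (A *ᵥ w) ⬝ᵥ (Jmat d *ᵥ (A *ᵥ w))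
      = (A *ᵥ w) ⬝ᵥ ((Jmat d * A) *ᵥ w) := by rw [mulVec_mulVec]
    _ = ((A *ᵥ w) ᵥ* (Jmat d * A)) ⬝ᵥ w := by rw [dotProduct_mulVec]
    _ = (((Jmat d * A)ᵀ * A) *ᵥ w) ⬝ᵥ w := by rw [← mulVec_transpose, mulVec_mulVec]
    _ = (Jmat d *ᵥ w) ⬝ᵥ w := by rw [transpose_mul, Jmat_symm, mul_assoc] at *; rw [hA]
    _ = w ⬝ᵥ (Jmat d *ᵥ w) := dotProduct_comm _ _

lemma qf_eq {d : ℕ} (w : Fin d → ℝ) :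
    qf w = ∑ i : Fin d, (if (i : ℕ) = 0 then -1 else 1) * w i ^ 2 := by
  simp only [qf, Jmat, dotProduct, mulVec_diagonal]
  congr 1; funext i; ring

lemma qf_neg_ne {d : ℕ} (w : Fin d → ℝ) (h0 : (0:ℕ) < d) (hw : qf w < 0) :
    w ⟨0, h0⟩ ≠ 0 := by
  intro hz
  have : (0:ℝ) ≤ qf w := by
    rw [qf_eq]
    apply Finset.sum_nonneg
    intro i _
    by_cases hi : (i : ℕ) = 0
    · have : i = ⟨0, h0⟩ := Fin.ext hi
      simp [hi, this, hz]
    · simp [hi]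
      positivity
  linarith

lemma abs_sign_of_ne {c : ℝ} (hc : c ≠ 0) : |Real.sign c| = 1 := by
  rcases lt_trichotomy c 0 with h | h | h
  · rw [Real.sign_of_neg h]; simp
  · exact absurd h hc
  · rw [Real.sign_of_pos h]; simp

/-- The fiber-length difference `|L(x) - L(y)|` between two points of a
degenerate fiber of half-pipe space is invariant under the half-pipe
structure group of block matrices `g = [[A,0],[v,±1]]` with `A ∈ O(n-1,1)`. -/
theorem stmt_18 (n : ℕ) (A : Matrix (Fin (n + 2)) (Fin (n + 2)) ℝ)
    (hA : Aᵀ * Jmat (n + 2) * A = Jmat (n + 2))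
    (v : Fin (n + 2) → ℝ) (δ : ℝ) (hδ : δ = 1 ∨ δ = -1)
    (g : Matrix (Fin (n + 2) ⊕ Unit) (Fin (n + 2) ⊕ Unit) ℝ)
    (hg : g = Matrix.fromBlocks A 0 (Matrix.replicateRow Unit v) (δ • 1))
    (x y : Fin (n + 2) ⊕ Unit → ℝ)
    (hxy : ∀ i : Fin (n + 2), x (Sum.inl i) = y (Sum.inl i))
    (hx : qf (fun i => x (Sum.inl i)) < 0) :
    qf (fun i => g.mulVec x (Sum.inl i)) < 0 ∧
    |Lfib n (g.mulVec x) - Lfib n (g.mulVec y)| = |Lfib n x - Lfib n y| := by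
  -- coordinates of g.mulVec
  have hgl : ∀ z : Fin (n + 2) ⊕ Unit → ℝ, ∀ i,
      g.mulVec z (Sum.inl i) = A.mulVec (fun j => z (Sum.inl j)) i := by
    intro z i
    simp [hg, mulVec, dotProduct, Fintype.sum_sum_type]
  have hgr : ∀ z : Fin (n + 2) ⊕ Unit → ℝ,
      g.mulVec z (Sum.inr ()) =
        (∑ j, v j * z (Sum.inl j)) + δ * z (Sum.inr ()) := by
    intro z
    simp [hg, mulVec, dotProduct, Fintype.sum_sum_type, Matrix.replicateRow]
  -- q invariance
  have hq : qf (fun i => g.mulVec x (Sum.inl i)) = qf (fun i => x (Sum.inl i)) := by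
    have := qf_inv A hA (fun j => x (Sum.inl j))
    rw [← this]
    congr 1
    funext i
    exact hgl x i
  have hq' : qf (fun i => g.mulVec x (Sum.inl i)) < 0 := hq ▸ hx
  refine ⟨hq', ?_⟩
  have hxyf : (fun i => x (Sum.inl i)) = fun i => y (Sum.inl i) := funext hxy
  -- hat parts of gx and gy agree
  have hgxy : ∀ i, g.mulVec x (Sum.inl i) = g.mulVec y (Sum.inl i) := by
    intro i
    rw [hgl x i, hgl y i, hxyf]
  -- abbreviations
  set s : ℝ := Real.sqrt (-(qf fun i => x (Sum.inl i))) with hs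
  have hs' : Real.sqrt (-(qf fun i => y (Sum.inl i))) = s := by rw [hs, hxyf]
  have hsg : Real.sqrt (-(qf fun i => g.mulVec x (Sum.inl i))) = s := by rw [hq, hs]
  have hsg' : Real.sqrt (-(qf fun i => g.mulVec y (Sum.inl i))) = s := by
    rw [show (fun i => g.mulVec y (Sum.inl i)) = fun i => g.mulVec x (Sum.inl i) from
      funext fun i => (hgxy i).symm, hq, hs]
  -- nonvanishing of first coordinates
  have h0 : (0:ℕ) < n + 2 := by omega
  have hx0 : x (Sum.inl 0) ≠ 0 := by
    have := qf_neg_ne (fun i => x (Sum.inl i)) h0 hx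
    simpa using this
  have hgx0 : g.mulVec x (Sum.inl 0) ≠ 0 := by
    have := qf_neg_ne (fun i => g.mulVec x (Sum.inl i)) h0 hq'
    simpa using this
  -- unfold Lfib
  have e1 : Lfib n (g.mulVec x) - Lfib n (g.mulVec y) =
      Real.sign (g.mulVec x (Sum.inl 0)) * δ * (x (Sum.inr ()) - y (Sum.inr ())) / s := by
    unfold Lfib
    have hsum : ∑ j, v j * x (Sum.inl j) = ∑ j, v j * y (Sum.inl j) :=
      Finset.sum_congr rfl fun j _ => by rw [hxy j]
    rw [hsg, hsg', hgr x, hgr y, ← hgxy 0, hsum]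
    ring
  have e2 : Lfib n x - Lfib n y =
      Real.sign (x (Sum.inl 0)) * (x (Sum.inr ()) - y (Sum.inr ())) / s := by
    unfold Lfib
    rw [hs', ← hs, ← hxy 0]
    ring
  have hδ1 : |δ| = 1 := by rcases hδ with h | h <;> simp [h]
  rw [e1, e2, abs_div, abs_div, abs_mul, abs_mul, abs_mul,
    abs_sign_of_ne hgx0, abs_sign_of_ne hx0, hδ1]
  ring
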